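/- For every n ≥ 1 and every 0 ≤ k ≤ n−1, n·s_{(n−k,1^k)} = Σ_{J ⊆ [n], |J| > k} (−1)^{|J|−k−1}·F^cyc_{n,J}, where s_{(n−k,1^k)} is the Schur function of hook shape. -/

import Mathlib

open Finset

namespace CQSym

/-- The exponent-vector (weight) of a word with letters among the positive
integers: the monomial `x_{w 0} ⋯ x_{w (n-1)}`. -/
noncomputable def wt {n : ℕ} (w : Fin n → ℕ+) : ℕ+ →₀ ℕ := ∑ i, Finsupp.single (w i) 1

/-- The fundamental quasi-symmetric function `F_{n,J}` for `J ⊆ [n-1]`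
(1-based positions): the sum of `x_{w 0} ⋯ x_{w (n-1)}` over weakly increasing
words with a strict ascent at every position of `J`. -/
noncomputable def Fqsym (n : ℕ) (J : Finset ℕ) : MvPowerSeries ℕ+ ℤ :=
  fun d => (Nat.card {w : Fin n → ℕ+ //
    Monotone w ∧ (∀ i : Fin n, (i : ℕ) + 1 ∈ J → w i < w (finRotate n i)) ∧
    wt w = d} : ℤ)

/-- The monomial quasi-symmetric function `M_{n,J}` for `J ⊆ [n-1]`:
the sum over weakly increasing words with a strict ascent exactly at the
positions of `J`. -/
noncomputable def Mqsym (n : ℕ) (J : Finset ℕ) : MvPowerSeries ℕ+ ℤ :=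
  fun d => (Nat.card {w : Fin n → ℕ+ //
    Monotone w ∧
    (∀ i : Fin n, (i : ℕ) + 1 < n → (((i : ℕ) + 1 ∈ J) ↔ w i < w (finRotate n i))) ∧
    wt w = d} : ℤ)

/-- The fundamental cyclic quasi-symmetric function `F^cyc_{n,J}` for
`J ⊆ [n]` (1-based positions): the sum of `x_{w 0} ⋯ x_{w (n-1)}` over pairs
`(w, k)` such that `w` is cyclically weakly increasing from position `k`
and has a (cyclic) strict ascent at every position of `J` except possibly
at the position just before `k`. -/
noncomputable def cFqsym (n : ℕ) (J : Finset ℕ) : MvPowerSeries ℕ+ ℤ :=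
  fun d => (Nat.card {p : (Fin n → ℕ+) × Fin n //
    Monotone (fun i : Fin n => p.1 (p.2 + i)) ∧
    (∀ i : Fin n, (i : ℕ) + 1 ∈ J → i ≠ (finRotate n).symm p.2 →
      p.1 i < p.1 (finRotate n i)) ∧
    wt p.1 = d} : ℤ)

/-- The monomial cyclic quasi-symmetric function `M^cyc_{n,J}` for
`J ⊆ [n]`: the sum of `x_{w 0} ⋯ x_{w (n-1)}` over pairs `(w, k)` such that
`w` is cyclically weakly increasing from position `k`, the position just
before `k` belongs to `J`, and at every other position the (cyclic) strict
ascents of `w` are exactly the positions of `J`. -/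
noncomputable def cMqsym (n : ℕ) (J : Finset ℕ) : MvPowerSeries ℕ+ ℤ :=
  fun d => (Nat.card {p : (Fin n → ℕ+) × Fin n //
    Monotone (fun i : Fin n => p.1 (p.2 + i)) ∧
    (((finRotate n).symm p.2 : Fin n) : ℕ) + 1 ∈ J ∧
    (∀ i : Fin n, i ≠ (finRotate n).symm p.2 →
      (((i : ℕ) + 1 ∈ J) ↔ p.1 i < p.1 (finRotate n i))) ∧
    wt p.1 = d} : ℤ)

/-- The cyclic shift `J - i` of a subset `J ⊆ [n]`, computed modulo `n`,
with representatives `1, …, n`. -/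
def cshift (n : ℕ) (J : Finset ℕ) (i : ℕ) : Finset ℕ :=
  J.image fun j => (j + n - i - 1) % n + 1

/-- The complete homogeneous symmetric function `h_n`: the sum of all
monomials of degree `n`. -/
noncomputable def hqsym (n : ℕ) : MvPowerSeries ℕ+ ℤ :=
  fun d => if d.sum (fun _ e => e) = n then 1 else 0

open scoped Classical in
/-- The elementary symmetric function `e_n`: the sum of all squarefree
monomials of degree `n`. -/
noncomputable def eqsym (n : ℕ) : MvPowerSeries ℕ+ ℤ :=
  fun d => if d.sum (fun _ e => e) = n ∧ ∀ x, d x ≤ 1 then 1 else 0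

/-- The Schur function of hook shape `(n-k, 1^k)`, defined via semistandard
tableaux: a weakly increasing first row of length `n-k`, a strictly
increasing leg of length `k` below its first cell. -/
noncomputable def hookSchur (n k : ℕ) : MvPowerSeries ℕ+ ℤ :=
  fun d => (Nat.card {p : (Fin (n - k) → ℕ+) × (Fin k → ℕ+) //
    Monotone p.1 ∧ StrictMono p.2 ∧
    (∀ (h1 : 0 < n - k) (h2 : 0 < k), p.1 ⟨0, h1⟩ < p.2 ⟨0, h2⟩) ∧
    wt p.1 + wt p.2 = d} : ℤ)

/-- The descent number of a word with (distinct) integer letters. -/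
def des {N : ℕ} (w : Fin N → ℤ) : ℕ :=
  (Finset.univ.filter fun i : Fin N => (i : ℕ) + 1 < N ∧ w (finRotate N i) < w i).card

/-- The cyclic descent number of a word with (distinct) integer letters. -/
def cdes {N : ℕ} (w : Fin N → ℤ) : ℕ :=
  (Finset.univ.filter fun i : Fin N => w (finRotate N i) < w i).card

/-- `w` is a shuffle of `u` and `v`. -/
def IsShuffle {m n : ℕ} (u : Fin m → ℤ) (v : Fin n → ℤ) (w : Fin (m + n) → ℤ) : Prop :=
  ∃ (f : Fin m → Fin (m + n)) (g : Fin n → Fin (m + n)),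
    StrictMono f ∧ StrictMono g ∧ (∀ i, w (f i) = u i) ∧ (∀ j, w (g j) = v j) ∧
    (∀ x, (∃ i, f i = x) ∨ (∃ j, g j = x))

/-- The cyclic class `[w]` is a cyclic shuffle of `[u]` and `[v]`: some
cyclic rotation of `w` is a shuffle of cyclic rotations of `u` and `v`. -/
def IsCyclicShuffle {m n : ℕ} (u : Fin m → ℤ) (v : Fin n → ℤ) (w : Fin (m + n) → ℤ) : Prop :=
  ∃ (kw : Fin (m + n)) (ku : Fin m) (kv : Fin n),
    IsShuffle (fun i => u (i + ku)) (fun i => v (i + kv)) (fun i => w (i + kw))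

/-- Rotation equivalence of words satisfying a property `P`;  `Quot` of this
relation is the set of cyclic equivalence classes. -/
def RotRel {N : ℕ} (P : (Fin N → ℤ) → Prop) (w₁ w₂ : {w : Fin N → ℤ // P w}) : Prop :=
  ∃ k : Fin N, ∀ i, w₁.val i = w₂.val (i + k)

/-- Binomial coefficient with integer upper and lower arguments, zero for
negative lower argument. -/
noncomputable def zchoose (a b : ℤ) : ℤ := if 0 ≤ b then Ring.choose a b.toNat else 0

/-- The map `Ψ`, sending a monomial `x_{i₁}^{m₁} ⋯ x_{i_k}^{m_k}`
(`i₁ < … < i_k`) to `q^{i_k}`, extended linearly. -/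
noncomputable def psi (f : MvPowerSeries ℕ+ ℤ) : PowerSeries ℤ :=
  PowerSeries.mk fun r =>
    if r = 0 then MvPowerSeries.coeff 0 f
    else ∑ᶠ d ∈ {d : ℕ+ →₀ ℕ |
        ∃ m ∈ d.support, (∀ m' ∈ d.support, m' ≤ m) ∧ (m : ℕ) = r},
      MvPowerSeries.coeff d f

/-- The product `⊙` on `ℤ[[q]]` determined by `q^i ⊙ q^j = q^{max(i,j)}`. -/
noncomputable def odot (a b : PowerSeries ℤ) : PowerSeries ℤ :=
  PowerSeries.mk fun r =>
    (PowerSeries.coeff r a) * (∑ s ∈ Finset.range (r + 1), PowerSeries.coeff s b) +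
    (∑ s ∈ Finset.range r, PowerSeries.coeff s a) * (PowerSeries.coeff r b)

/-- A multivariate power series of bounded (total) degree. -/
def BoundedDeg (f : MvPowerSeries ℕ+ ℤ) : Prop :=
  ∃ D, ∀ d : ℕ+ →₀ ℕ, D < d.sum (fun _ e => e) → MvPowerSeries.coeff d f = 0

/-- Cellini's cyclic descent set of a permutation (0-based positions). -/
def cDesF {n : ℕ} (w : Fin n → Fin n) : Finset (Fin n) :=
  Finset.univ.filter fun i => w (finRotate n i) < w i

/-- The ordinary descent set of a permutation (0-based positions). -/
def DesF {n : ℕ} (w : Fin n → Fin n) : Finset (Fin n) :=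
  Finset.univ.filter fun i => (i : ℕ) + 1 < n ∧ w (finRotate n i) < w i


lemma wt_apply {n : ℕ} (w : Fin n → ℕ+) (x : ℕ+) :
    wt w x = (univ.filter fun i => w i = x).card := by
  rw [wt, Finsupp.finset_sum_apply, Finset.card_filter]
  simp [Finsupp.single_apply]

lemma wt_sum {n : ℕ} (w : Fin n → ℕ+) : (wt w).sum (fun _ e => e) = n := by
  rw [show ((wt w).sum fun _ e => e) = Multiset.card (Finsupp.toMultiset (wt w)) from
    (Finsupp.card_toMultiset _).symm, wt, map_sum]
  simp [Finsupp.toMultiset_single]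

lemma wt_shift {n : ℕ} [NeZero n] (w : Fin n → ℕ+) (m : Fin n) :
    wt (fun i => w (m + i)) = wt w := by
  unfold wt
  exact Fintype.sum_equiv (Equiv.addLeft m) _ _ (fun i => rfl)

lemma count_ofFn : ∀ {n : ℕ} (w : Fin n → ℕ+) (a : ℕ+), (List.ofFn w).count a = wt w a := by
  intro n
  induction n with
  | zero => intro w a; simp [wt_apply]
  | succ n ih =>
    intro w a
    rw [List.ofFn_succ, List.count_cons, ih, wt_apply, wt_apply, Finset.card_filter,
      Finset.card_filter, Fin.sum_univ_succ]
    rw [Nat.add_comm]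
    simp [beq_iff_eq]

lemma mono_unique {n : ℕ} {u v : Fin n → ℕ+} (hu : Monotone u) (hv : Monotone v)
    (h : wt u = wt v) : u = v := by
  have h2 : List.ofFn u = List.ofFn v := by
    apply List.Perm.eq_of_sortedLE (List.sortedLE_ofFn_iff.2 hu) (List.sortedLE_ofFn_iff.2 hv)
    rw [List.perm_iff_count]
    intro a
    rw [count_ofFn, count_ofFn, h]
  exact List.ofFn_injective h2

lemma exists_mono {n : ℕ} (d : ℕ+ →₀ ℕ) (h : d.sum (fun _ e => e) = n) :
    ∃ u : Fin n → ℕ+, Monotone u ∧ wt u = d := by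
  set l := Multiset.sort (Finsupp.toMultiset d) (· ≤ ·) with hl
  have hlen : l.length = n := by
    rw [hl, Multiset.length_sort, Finsupp.card_toMultiset]; exact h
  refine ⟨fun i => l.get (Fin.cast hlen.symm i), ?_, ?_⟩
  · rw [← List.sortedLE_ofFn_iff]
    have hofn : List.ofFn (fun i => l.get (Fin.cast hlen.symm i)) = l := by
      apply List.ext_get (by simp [hlen])
      intro i h1 h2
      simp [List.get_ofFn]
    rw [hofn]
    exact List.sortedLE_iff_pairwise.2 (Multiset.pairwise_sort (s := _) (r := _))
  · ext a
    have hofn : List.ofFn (fun i => l.get (Fin.cast hlen.symm i)) = l := by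
      apply List.ext_get (by simp [hlen])
      intro i h1 h2
      simp [List.get_ofFn]
    rw [← count_ofFn, hofn, ← Multiset.coe_count, hl, Multiset.sort_eq,
      Finsupp.count_toMultiset]

lemma wt_support {n : ℕ} (u : Fin n → ℕ+) : (wt u).support = Finset.image u univ := by
  ext a
  simp only [Finsupp.mem_support_iff, wt_apply, Finset.mem_image, Finset.mem_univ, true_and]
  rw [← Nat.pos_iff_ne_zero, Finset.card_pos, Finset.filter_nonempty_iff]
  simp

lemma ascent_card {n : ℕ} {u : Fin (n+1) → ℕ+} (hu : Monotone u) :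
    (univ.filter fun t : Fin (n+1) => u t < u (t + 1)).card + 1 = (wt u).support.card := by
  have h0 : ∀ t : Fin (n+1), u 0 ≤ u t := fun t => hu (Fin.zero_le t)
  have hne : ∀ t : Fin (n+1), u t < u (t+1) → t ≠ Fin.last n := by
    intro t ht hlast
    subst hlast
    have : (Fin.last n + 1 : Fin (n+1)) = 0 := by
      simp [Fin.ext_iff, Fin.add_def]
    rw [this] at ht
    exact absurd (h0 (Fin.last n)) (not_le.2 ht)
  have hsucc : ∀ t : Fin (n+1), t ≠ Fin.last n → ((t + 1 : Fin (n+1)) : ℕ) = (t : ℕ) + 1 := by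
    intro t ht
    rw [Fin.val_add_one]
    simp [ht]
  have key : (univ.filter fun t : Fin (n+1) => u t < u (t + 1)).card
      = ((Finset.image u univ).erase (u 0)).card := by
    apply Finset.card_bij (fun t _ => u (t+1))
    · intro t ht
      simp only [Finset.mem_filter, Finset.mem_univ, true_and] at ht
      exact Finset.mem_erase.2 ⟨(lt_of_le_of_lt (h0 t) ht).ne', Finset.mem_image.2 ⟨t+1, Finset.mem_univ _, rfl⟩⟩
    · intro t ht t' ht' heq
      simp only [Finset.mem_filter, Finset.mem_univ, true_and] at ht ht'
      by_contra hne2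
      rcases lt_or_gt_of_ne hne2 with hlt | hlt
      · have : (t+1 : Fin (n+1)) ≤ t' := by
          rw [Fin.le_def, hsucc t (hne t ht)]
          exact hlt
        exact absurd (heq ▸ (lt_of_le_of_lt (hu this) ht')) (lt_irrefl _)
      · have : (t'+1 : Fin (n+1)) ≤ t := by
          rw [Fin.le_def, hsucc t' (hne t' ht')]
          exact hlt
        exact absurd (heq ▸ (lt_of_le_of_lt (hu this) ht)) (lt_irrefl _)
    · intro a ha
      rcases Finset.mem_erase.1 ha with ⟨hane, haim⟩
      have hfil : (univ.filter fun i : Fin (n+1) => u i = a).Nonempty := by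
        rcases Finset.mem_image.1 haim with ⟨i, _, hi⟩
        exact ⟨i, Finset.mem_filter.2 ⟨Finset.mem_univ _, hi⟩⟩
      obtain ⟨i₀, hi₀mem, hi₀min⟩ : ∃ i₀ ∈ univ.filter (fun i : Fin (n+1) => u i = a),
          ∀ j ∈ univ.filter (fun i : Fin (n+1) => u i = a), i₀ ≤ j := by
        obtain ⟨i₀, h1, h2⟩ := Finset.exists_min_image _ id hfil
        exact ⟨i₀, h1, h2⟩
      have hui₀ : u i₀ = a := (Finset.mem_filter.1 hi₀mem).2
      have hi₀pos : 0 < (i₀ : ℕ) := by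
        rcases Nat.eq_zero_or_pos (i₀ : ℕ) with h' | h'
        · exact absurd (by rw [← hui₀]; congr 1; exact Fin.ext h') hane
        · exact h'
      have htval : (i₀ : ℕ) - 1 < n + 1 := by omega
      have htlt : (⟨(i₀ : ℕ) - 1, htval⟩ : Fin (n+1)) < i₀ := by
        rw [Fin.lt_def]; simp only []; omega
      have htne : (⟨(i₀ : ℕ) - 1, htval⟩ : Fin (n+1)) ≠ Fin.last n := by
        intro h'
        have := congrArg Fin.val h'
        simp only [Fin.val_last] at this
        have := i₀.isLt
        omega
      have hts : ((⟨(i₀ : ℕ) - 1, htval⟩ : Fin (n+1)) + 1) = i₀ := by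
        apply Fin.ext
        rw [hsucc _ htne]
        simp only []
        omega
      have hlt : u ⟨(i₀ : ℕ) - 1, htval⟩ < a := by
        rcases lt_or_eq_of_le (hui₀ ▸ hu htlt.le) with h' | h'
        · exact h'
        · exfalso
          have := hi₀min _ (Finset.mem_filter.2 ⟨Finset.mem_univ _, h'⟩)
          exact absurd htlt (not_lt.2 this)
      refine ⟨⟨(i₀ : ℕ) - 1, htval⟩, ?_, ?_⟩
      · simp only [Finset.mem_filter, Finset.mem_univ, true_and]
        rw [hts, hui₀]
        exact hlt
      · rw [hts, hui₀]
  rw [key, wt_support]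
  rw [Finset.card_erase_add_one (Finset.mem_image.2 ⟨0, Finset.mem_univ _, rfl⟩)]

lemma alt_sum : ∀ (k a : ℕ), 1 ≤ a →
    ∑ j ∈ Finset.Ioc k a, (-1 : ℤ)^(j - k - 1) * (a.choose j) = ((a-1).choose k : ℤ) := by
  intro k
  induction k with
  | zero =>
    intro a ha
    have h := Int.alternating_sum_range_choose (n := a)
    rw [if_neg (by omega)] at h
    have hins : Finset.range (a+1) = insert 0 (Finset.Ioc 0 a) := by
      ext j; simp
    rw [hins, Finset.sum_insert (by simp)] at h
    simp only [pow_zero, one_mul, Nat.choose_zero_right, Nat.cast_one] at h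
    have hterm : ∀ j ∈ Finset.Ioc 0 a, (-1:ℤ)^j * (a.choose j)
        = -((-1:ℤ)^(j-0-1) * (a.choose j)) := by
      intro j hj
      simp only [Finset.mem_Ioc] at hj
      obtain ⟨m, rfl⟩ : ∃ m, j = m + 1 := ⟨j - 1, by omega⟩
      simp only [Nat.add_sub_cancel, pow_succ, Nat.sub_zero]
      ring
    rw [Finset.sum_congr rfl hterm, Finset.sum_neg_distrib] at h
    simp only [Nat.sub_zero] at h ⊢
    simp [Nat.choose_zero_right]
    linarith [h]
  | succ k ih =>
    intro a ha
    by_cases hka : k + 1 ≤ a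
    · have hS := ih a ha
      have hsplit : Finset.Ioc k a = insert (k+1) (Finset.Ioc (k+1) a) := by
        ext j; simp; omega
      rw [hsplit, Finset.sum_insert (by simp)] at hS
      have h0 : (k+1) - k - 1 = 0 := by omega
      rw [h0, pow_zero, one_mul] at hS
      have hterm : ∀ j ∈ Finset.Ioc (k+1) a, (-1:ℤ)^(j-k-1) * (a.choose j)
          = -((-1:ℤ)^(j-(k+1)-1) * (a.choose j)) := by
        intro j hj
        simp only [Finset.mem_Ioc] at hj
        have h1 : j - k - 1 = (j - (k+1) - 1) + 1 := by omega
        rw [h1, pow_succ]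
        ring
      rw [Finset.sum_congr rfl hterm, Finset.sum_neg_distrib] at hS
      have hp : a.choose (k+1) = (a-1).choose k + (a-1).choose (k+1) := by
        obtain ⟨b, rfl⟩ : ∃ b, a = b + 1 := ⟨a-1, by omega⟩
        simp [Nat.choose_succ_succ]
      have : ∑ j ∈ Finset.Ioc (k+1) a, (-1:ℤ)^(j-(k+1)-1) * (a.choose j)
          = (a.choose (k+1) : ℤ) - ((a-1).choose k : ℤ) := by linarith [hS]
      rw [this, hp]
      push_cast
      ring
    · rw [Finset.Ioc_eq_empty (by omega), Finset.sum_empty,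
        Nat.choose_eq_zero_of_lt (by omega)]
      simp

lemma powerset_alt_sum {α : Type*} [DecidableEq α] (A : Finset α) (hA : A.Nonempty) (k : ℕ) :
    ∑ J ∈ A.powerset.filter (fun J => k < J.card), (-1:ℤ)^(J.card - k - 1)
      = ((A.card - 1).choose k : ℤ) := by
  rw [← alt_sum k A.card (Finset.card_pos.2 hA), Finset.sum_filter, Finset.sum_powerset]
  have hinner : ∀ j ∈ Finset.range (A.card + 1),
      ∑ t ∈ Finset.powersetCard j A, (if k < t.card then (-1:ℤ)^(t.card-k-1) else 0)
        = (if k < j then (-1:ℤ)^(j-k-1) * (A.card.choose j) else 0) := by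
    intro j hj
    have : ∀ t ∈ Finset.powersetCard j A, (if k < t.card then (-1:ℤ)^(t.card-k-1) else 0)
        = (if k < j then (-1:ℤ)^(j-k-1) else 0) := by
      intro t ht
      rw [(Finset.mem_powersetCard.1 ht).2]
    rw [Finset.sum_congr rfl this, Finset.sum_const, Finset.card_powersetCard]
    by_cases h : k < j <;> simp [h, mul_comm]
  rw [Finset.sum_congr rfl hinner]
  rw [← Finset.sum_filter]
  apply Finset.sum_congr _ (fun _ _ => rfl)
  ext j; simp; omega

lemma fsum_add (f g : ℕ+ →₀ ℕ) : (f + g).sum (fun _ e => e)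
    = f.sum (fun _ e => e) + g.sum (fun _ e => e) := by
  have c : ∀ h : ℕ+ →₀ ℕ, (h.sum fun _ e => e) = Multiset.card (Finsupp.toMultiset h) :=
    fun h => (Finsupp.card_toMultiset h).symm
  rw [c, c, c, map_add, Multiset.card_add]

lemma single_sum_apply (C : Finset ℕ+) (a : ℕ+) :
    (∑ x ∈ C, Finsupp.single x (1:ℕ)) a = if a ∈ C then 1 else 0 := by
  rw [Finsupp.finset_sum_apply]
  simp [Finsupp.single_apply]

lemma wt_strictmono {k : ℕ} {c : Fin k → ℕ+} (hc : Function.Injective c) :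
    wt c = ∑ x ∈ Finset.image c univ, Finsupp.single x 1 := by
  rw [wt]
  exact (Finset.sum_image (f := fun x => Finsupp.single x (1:ℕ)) (fun a _ b _ h => hc h)).symm

lemma hookSchur_coeff (n k : ℕ) (hn : 0 < n) (hk : k ≤ n - 1) (d : ℕ+ →₀ ℕ) :
    (Nat.card {p : (Fin (n - k) → ℕ+) × (Fin k → ℕ+) //
      Monotone p.1 ∧ StrictMono p.2 ∧
      (∀ (h1 : 0 < n - k) (h2 : 0 < k), p.1 ⟨0, h1⟩ < p.2 ⟨0, h2⟩) ∧
      wt p.1 + wt p.2 = d} : ℕ)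
      = if d.sum (fun _ e => e) = n then (d.support.card - 1).choose k else 0 := by
  have hnk : 0 < n - k := by omega
  by_cases hd : d.sum (fun _ e => e) = n
  case neg =>
    rw [if_neg hd]
    refine Nat.card_eq_zero.2 (Or.inl ⟨fun p => ?_⟩)
    obtain ⟨⟨r,c⟩, hr, hc, hrc, hw⟩ := p
    apply hd
    rw [← hw, fsum_add, wt_sum, wt_sum]
    omega
  case pos =>
    rw [if_pos hd]
    have hdne : d.support.Nonempty := by
      rw [Finset.nonempty_iff_ne_empty]
      intro h
      rw [Finsupp.support_eq_empty.1 h] at hd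
      simp at hd
      omega
    set m0 := d.support.min' hdne with hm0
    have hmem : ∀ p : {p : (Fin (n - k) → ℕ+) × (Fin k → ℕ+) //
        Monotone p.1 ∧ StrictMono p.2 ∧
        (∀ (h1 : 0 < n - k) (h2 : 0 < k), p.1 ⟨0, h1⟩ < p.2 ⟨0, h2⟩) ∧
        wt p.1 + wt p.2 = d},
        Finset.image p.1.2 univ ∈ Finset.powersetCard k (d.support.erase m0) := by
      rintro ⟨⟨r,c⟩, hr, hc, hrc, hw⟩
      dsimp only at hr hc hrc hw ⊢
      rw [Finset.mem_powersetCard]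
      constructor
      · intro x hx
        rcases Finset.mem_image.1 hx with ⟨j, _, hj⟩
        have hxs : x ∈ d.support := by
          rw [Finsupp.mem_support_iff, ← hw, Finsupp.add_apply]
          have : 0 < wt c x := by
            rw [wt_apply, Finset.card_pos]
            exact ⟨j, Finset.mem_filter.2 ⟨Finset.mem_univ _, hj⟩⟩
          omega
        refine Finset.mem_erase.2 ⟨?_, hxs⟩
        intro hxm0
        have h2 : 0 < k := j.pos
        have hr0 : r ⟨0, hnk⟩ ∈ d.support := by
          rw [Finsupp.mem_support_iff, ← hw, Finsupp.add_apply]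
          have : 0 < wt r (r ⟨0,hnk⟩) := by
            rw [wt_apply, Finset.card_pos]
            exact ⟨⟨0,hnk⟩, by simp⟩
          omega
        have hlt : r ⟨0,hnk⟩ < m0 := by
          calc r ⟨0,hnk⟩ < c ⟨0,h2⟩ := hrc hnk h2
          _ ≤ c j := hc.monotone (by simp [Fin.le_def])
          _ = m0 := by rw [hj, hxm0]
        exact absurd (d.support.min'_le _ hr0) (not_le.2 hlt)
      · rw [Finset.card_image_of_injective _ hc.injective, Finset.card_univ, Fintype.card_fin]
    have key : (Nat.card {p : (Fin (n - k) → ℕ+) × (Fin k → ℕ+) //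
        Monotone p.1 ∧ StrictMono p.2 ∧
        (∀ (h1 : 0 < n - k) (h2 : 0 < k), p.1 ⟨0, h1⟩ < p.2 ⟨0, h2⟩) ∧
        wt p.1 + wt p.2 = d} : ℕ)
        = Nat.card {C // C ∈ Finset.powersetCard k (d.support.erase m0)} := by
      apply Nat.card_congr
      refine Equiv.ofBijective (fun p => ⟨Finset.image p.1.2 univ, hmem p⟩) ⟨?_, ?_⟩
      · rintro ⟨⟨r,c⟩, hr, hc, hrc, hw⟩ ⟨⟨r',c'⟩, hr', hc', hrc', hw'⟩ heq
        dsimp only at hr hc hrc hw hr' hc' hrc' hw'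
        simp only [Subtype.mk.injEq] at heq
        have hcc : c = c' := mono_unique hc.monotone hc'.monotone
          (by rw [wt_strictmono hc.injective, wt_strictmono hc'.injective, heq])
        have hrr : r = r' := by
          apply mono_unique hr hr'
          have h3 := hw.trans hw'.symm
          rw [hcc] at h3
          exact add_right_cancel h3
        simp only [Subtype.mk.injEq, Prod.mk.injEq]
        exact ⟨hrr, hcc⟩
      · rintro ⟨C, hC⟩
        rw [Finset.mem_powersetCard] at hC
        obtain ⟨hCsub, hCcard⟩ := hC
        set c : Fin k → ℕ+ := fun j => (C.orderIsoOfFin hCcard j : ℕ+) with hcdef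
        have hc : StrictMono c := fun a b hab => by
          exact_mod_cast (C.orderIsoOfFin hCcard).lt_iff_lt.2 hab
        have hcim : Finset.image c univ = C := by
          apply Finset.eq_of_subset_of_card_le
          · intro x hx
            rcases Finset.mem_image.1 hx with ⟨j,_,hj⟩
            rw [← hj]
            exact (C.orderIsoOfFin hCcard j).2
          · rw [Finset.card_image_of_injective _ hc.injective, Finset.card_univ,
              Fintype.card_fin, hCcard]
        have hwc : wt c = ∑ x ∈ C, Finsupp.single x 1 := by
          rw [wt_strictmono hc.injective, hcim]
        have hle : ∀ x, wt c x ≤ d x := by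
          intro x
          rw [hwc, single_sum_apply]
          by_cases hx : x ∈ C
          · rw [if_pos hx]
            have hxd : x ∈ d.support := Finset.mem_of_mem_erase (hCsub hx)
            rw [Finsupp.mem_support_iff] at hxd
            omega
          · simp [hx]
        have hdd : (d - wt c) + wt c = d := by
          ext x
          have := hle x
          simp only [Finsupp.add_apply, Finsupp.tsub_apply]
          omega
        have hsum' : (d - wt c).sum (fun _ e => e) = n - k := by
          have h1 := fsum_add (d - wt c) (wt c)
          rw [hdd, hd, wt_sum] at h1
          omega
        obtain ⟨r, hr, hwr⟩ := exists_mono (n := n - k) (d - wt c) hsum'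
        have hm0C : m0 ∉ C := fun h => (Finset.mem_erase.1 (hCsub h)).1 rfl
        have hm0mem : m0 ∈ (wt r).support := by
          rw [hwr, Finsupp.mem_support_iff, Finsupp.tsub_apply, hwc, single_sum_apply,
            if_neg hm0C]
          have hne : d m0 ≠ 0 := Finsupp.mem_support_iff.1 (d.support.min'_mem hdne)
          omega
        have hrc0 : ∀ (h1 : 0 < n - k) (h2 : 0 < k), r ⟨0,h1⟩ < c ⟨0,h2⟩ := by
          intro h1 h2
          rcases Finset.mem_image.1 (by rw [← wt_support]; exact hm0mem) with ⟨i, _, hi⟩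
          have hr0le : r ⟨0,h1⟩ ≤ m0 := hi ▸ hr (by simp [Fin.le_def])
          have hcmem := (C.orderIsoOfFin hCcard ⟨0,h2⟩).2
          rcases Finset.mem_erase.1 (hCsub hcmem) with ⟨hne, hmem2⟩
          exact lt_of_le_of_lt hr0le
            (lt_of_le_of_ne (d.support.min'_le _ hmem2) (Ne.symm hne))
        refine ⟨⟨(r, c), hr, hc, hrc0, ?_⟩, ?_⟩
        · rw [hwr, hdd]
        · apply Subtype.ext
          exact hcim
    rw [key, Nat.card_eq_fintype_card, Fintype.card_coe, Finset.card_powersetCard,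
      Finset.card_erase_of_mem (d.support.min'_mem hdne)]

lemma wt_unshift {n : ℕ} [NeZero n] (u : Fin n → ℕ+) (m : Fin n) :
    wt (fun i => u (i - m)) = wt u := by
  unfold wt
  exact Fintype.sum_equiv (Equiv.subRight m) _ _ (fun i => rfl)

lemma cFqsym_coeff (n : ℕ) [NeZero n] (J : Finset ℕ) (d : ℕ+ →₀ ℕ)
    (u : Fin n → ℕ+) (hu : Monotone u) (hwu : wt u = d) :
    (Nat.card {p : (Fin n → ℕ+) × Fin n //
      Monotone (fun i : Fin n => p.1 (p.2 + i)) ∧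
      (∀ i : Fin n, (i : ℕ) + 1 ∈ J → i ≠ (finRotate n).symm p.2 →
        p.1 i < p.1 (finRotate n i)) ∧
      wt p.1 = d} : ℕ)
    = (univ.filter fun m : Fin n => ∀ i : Fin n, (i : ℕ) + 1 ∈ J →
        i ≠ (finRotate n).symm m → u (i - m) < u (finRotate n i - m)).card := by
  have hkey : ∀ (w : Fin n → ℕ+) (m : Fin n), Monotone (fun i : Fin n => w (m + i)) →
      wt w = d → w = fun i => u (i - m) := by
    intro w m hmono hwd
    have h1 : (fun i : Fin n => w (m + i)) = u := by
      apply mono_unique hmono hu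
      rw [wt_shift, hwd, hwu]
    funext i
    have h2 : w (m + (i - m)) = u (i - m) := congrFun h1 (i - m)
    rw [show m + (i - m) = i by abel] at h2
    exact h2
  rw [← Fintype.card_subtype, ← Nat.card_eq_fintype_card]
  apply Nat.card_congr
  refine Equiv.ofBijective (fun p => ⟨p.1.2, ?_⟩) ⟨?_, ?_⟩
  · obtain ⟨⟨w, m⟩, h1, h2, h3⟩ := p
    dsimp only at h1 h2 h3 ⊢
    intro i hiJ hib
    have hw := hkey w m h1 h3
    rw [← congrFun hw i, ← congrFun hw (finRotate n i)]
    exact h2 i hiJ hib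
  · rintro ⟨⟨w, m⟩, h1, h2, h3⟩ ⟨⟨w', m'⟩, h1', h2', h3'⟩ heq
    dsimp only at h1 h2 h3 h1' h2' h3'
    simp only [Subtype.mk.injEq] at heq
    subst heq
    have hw := hkey w m h1 h3
    have hw' := hkey w' m h1' h3'
    exact Subtype.ext (Prod.ext (hw.trans hw'.symm) rfl)
  · rintro ⟨m, hm⟩
    refine ⟨⟨((fun i => u (i - m)), m), ?_, ?_, ?_⟩, rfl⟩
    · have : (fun i : Fin n => u (m + i - m)) = u := by
        funext i
        rw [add_sub_cancel_left]
      dsimp only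
      rw [show (fun i : Fin n => u (m + i - m)) = u from this]
      exact hu
    · exact hm
    · rw [wt_unshift, hwu]

lemma A0_card {n : ℕ} {u : Fin (n+1) → ℕ+} (hu : Monotone u) (m : Fin (n+1)) :
    (univ.filter fun i : Fin (n+1) => i = (finRotate (n+1)).symm m ∨
      u (i - m) < u (finRotate (n+1) i - m)).card = (wt u).support.card := by
  have hsymm : (finRotate (n+1)).symm m = m - 1 := by
    rw [Equiv.symm_apply_eq, finRotate_succ_apply, sub_add_cancel]
  have himg : (univ.filter fun i : Fin (n+1) => i = (finRotate (n+1)).symm m ∨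
      u (i - m) < u (finRotate (n+1) i - m))
      = Finset.image (fun t => t + m)
        (univ.filter fun t : Fin (n+1) => t = Fin.last n ∨ u t < u (t + 1)) := by
    ext i
    simp only [Finset.mem_filter, Finset.mem_univ, true_and, Finset.mem_image]
    constructor
    · intro h
      refine ⟨i - m, ?_, by rw [sub_add_cancel]⟩
      rcases h with h | h
      · left
        rw [h, hsymm]
        apply Fin.ext
        rw [show (m - 1 - m : Fin (n+1)) = -1 by abel, Fin.coe_neg_one, Fin.val_last]
      · right
        rw [finRotate_succ_apply] at h
        rw [show ((i - m) + 1 : Fin (n+1)) = i + 1 - m by abel]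
        exact h
    · rintro ⟨t, ht, rfl⟩
      rcases ht with h | h
      · left
        rw [hsymm, h, show (Fin.last n : Fin (n+1)) = -1 from by
          apply Fin.ext
          rw [Fin.coe_neg_one, Fin.val_last]]
        abel
      · right
        rw [finRotate_succ_apply,
          show (t + m - m : Fin (n+1)) = t by abel,
          show (t + m + 1 - m : Fin (n+1)) = t + 1 by abel]
        exact h
  rw [himg, Finset.card_image_of_injective _ (add_left_injective m)]
  have hins : (univ.filter fun t : Fin (n+1) => t = Fin.last n ∨ u t < u (t + 1))
      = insert (Fin.last n) (univ.filter fun t : Fin (n+1) => u t < u (t + 1)) := by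
    ext t
    simp only [Finset.mem_filter, Finset.mem_univ, true_and, Finset.mem_insert]
  have hnotmem : Fin.last n ∉ (univ.filter fun t : Fin (n+1) => u t < u (t + 1)) := by
    simp only [Finset.mem_filter, Finset.mem_univ, true_and, not_lt]
    rw [Fin.last_add_one]
    exact hu (Fin.zero_le _)
  rw [hins, Finset.card_insert_of_notMem hnotmem]
  exact ascent_card hu

/-- Expansion of the hook Schur function:
`n·s_{(n−k,1^k)} = Σ_{J ⊆ [n], |J| > k} (−1)^{|J|−k−1} F^cyc_{n,J}`. -/
theorem hook_schur_expansion (n k : ℕ) (hn : 0 < n) (hk : k ≤ n - 1) :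
    n • hookSchur n k
      = ∑ J ∈ (Finset.Icc 1 n).powerset.filter (fun J => k < J.card),
          ((-1 : ℤ) ^ (J.card - k - 1)) • cFqsym n J := by

  obtain ⟨N, rfl⟩ : ∃ N, n = N + 1 := ⟨n - 1, by omega⟩
  haveI : NeZero (N+1) := ⟨Nat.succ_ne_zero N⟩
  funext d
  have hsm : ∀ (z : ℤ) (f : MvPowerSeries ℕ+ ℤ), (z • f) d = z * f d := fun _ _ => rfl
  have hev : (∑ J ∈ (Finset.Icc 1 (N+1)).powerset.filter (fun J => k < J.card),
      ((-1 : ℤ) ^ (J.card - k - 1)) • cFqsym (N+1) J) d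
      = ∑ J ∈ (Finset.Icc 1 (N+1)).powerset.filter (fun J => k < J.card),
        ((-1 : ℤ) ^ (J.card - k - 1)) * cFqsym (N+1) J d := by
    let ev : MvPowerSeries ℕ+ ℤ →+ ℤ := ⟨⟨fun f => f d, rfl⟩, fun _ _ => rfl⟩
    have hm := map_sum ev (fun J => ((-1 : ℤ) ^ (J.card - k - 1) • cFqsym (N+1) J))
      ((Finset.Icc 1 (N+1)).powerset.filter (fun J => k < J.card))
    refine Eq.trans ?_ (Eq.trans hm ?_)
    · rfl
    · exact Finset.sum_congr rfl fun J _ => hsm _ _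
  have hLs : ((N+1) • hookSchur (N+1) k) d = ((N+1) : ℤ) * hookSchur (N+1) k d := by
    show ((N+1) : ℕ) • (hookSchur (N+1) k d) = _
    rw [nsmul_eq_mul]
    push_cast
    ring
  by_cases hd : d.sum (fun _ e => e) = N + 1
  case neg =>
    have hH : hookSchur (N+1) k d = 0 := by
      simp only [hookSchur]
      rw [hookSchur_coeff (N+1) k hn hk d, if_neg hd]
      simp
    have hcF0 : ∀ J, cFqsym (N+1) J d = 0 := by
      intro J
      simp only [cFqsym]
      rw [Nat.card_eq_zero.2 (Or.inl ⟨fun p => by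
        obtain ⟨⟨w, m⟩, h1, h2, h3⟩ := p
        exact hd (by rw [← h3]; exact wt_sum w)⟩)]
      simp
    rw [hev, hLs, hH]
    rw [Finset.sum_congr rfl fun J _ => by rw [hcF0 J, mul_zero]]
    simp
  case pos =>
    classical
    obtain ⟨u, hu, hwu⟩ := exists_mono d hd
    set s := d.support.card with hs
    have hA1card : ∀ m : Fin (N+1), (((univ.filter fun i : Fin (N+1) =>
        i = (finRotate (N+1)).symm m ∨ u (i - m) < u (finRotate (N+1) i - m)).image
          (fun i : Fin (N+1) => (i : ℕ) + 1)).card) = s := by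
      intro m
      rw [Finset.card_image_of_injective _ (fun a b h => Fin.ext (by omega : (a:ℕ) = b))]
      rw [A0_card hu m, hwu]
    have hA1sub : ∀ m : Fin (N+1), ((univ.filter fun i : Fin (N+1) =>
        i = (finRotate (N+1)).symm m ∨ u (i - m) < u (finRotate (N+1) i - m)).image
          (fun i : Fin (N+1) => (i : ℕ) + 1)) ⊆ Finset.Icc 1 (N+1) := by
      intro m x hx
      rcases Finset.mem_image.1 hx with ⟨i, _, rfl⟩
      rw [Finset.mem_Icc]
      have := i.isLt
      omega
    have hA1ne : ∀ m : Fin (N+1), ((univ.filter fun i : Fin (N+1) =>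
        i = (finRotate (N+1)).symm m ∨ u (i - m) < u (finRotate (N+1) i - m)).image
          (fun i : Fin (N+1) => (i : ℕ) + 1)).Nonempty := fun m =>
      ⟨_, Finset.mem_image.2 ⟨_, Finset.mem_filter.2 ⟨Finset.mem_univ _, Or.inl rfl⟩, rfl⟩⟩
    have hcond : ∀ (J : Finset ℕ), J ⊆ Finset.Icc 1 (N+1) → ∀ m : Fin (N+1),
        ((∀ i : Fin (N+1), (i : ℕ) + 1 ∈ J → i ≠ (finRotate (N+1)).symm m →
          u (i - m) < u (finRotate (N+1) i - m)) ↔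
        J ⊆ ((univ.filter fun i : Fin (N+1) =>
          i = (finRotate (N+1)).symm m ∨ u (i - m) < u (finRotate (N+1) i - m)).image
            (fun i : Fin (N+1) => (i : ℕ) + 1))) := by
      intro J hJ m
      constructor
      · intro h x hx
        have hxI := hJ hx
        rw [Finset.mem_Icc] at hxI
        have hxlt : x - 1 < N + 1 := by omega
        have hxi : ((⟨x - 1, hxlt⟩ : Fin (N+1)) : ℕ) + 1 = x := by simp; omega
        by_cases hib : (⟨x - 1, hxlt⟩ : Fin (N+1)) = (finRotate (N+1)).symm m
        · exact Finset.mem_image.2 ⟨_, Finset.mem_filter.2 ⟨Finset.mem_univ _, Or.inl hib⟩, hxi⟩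
        · exact Finset.mem_image.2 ⟨_, Finset.mem_filter.2 ⟨Finset.mem_univ _,
            Or.inr (h _ (by rw [hxi]; exact hx) hib)⟩, hxi⟩
      · intro h i hiJ hib
        rcases Finset.mem_image.1 (h hiJ) with ⟨i', hi', heq⟩
        have hii : i' = i := Fin.ext (by omega : (i' : ℕ) = i)
        subst hii
        rcases (Finset.mem_filter.1 hi').2 with h' | h'
        · exact absurd h' hib
        · exact h'
    rw [hev, hLs]
    have hHc : hookSchur (N+1) k d = ((s-1).choose k : ℤ) := by
      simp only [hookSchur]
      rw [hookSchur_coeff (N+1) k hn hk d, if_pos hd]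
    have hFc : ∀ J, cFqsym (N+1) J d
        = ((univ.filter fun m : Fin (N+1) => ∀ i : Fin (N+1), (i : ℕ) + 1 ∈ J →
            i ≠ (finRotate (N+1)).symm m → u (i - m) < u (finRotate (N+1) i - m)).card : ℤ) := by
      intro J
      simp only [cFqsym]
      rw [cFqsym_coeff (N+1) J d u hu hwu]
    rw [hHc, Finset.sum_congr rfl fun J _ => by rw [hFc J]]
    have exch : ∀ J ∈ (Finset.Icc 1 (N+1)).powerset.filter (fun J => k < J.card),
        ((-1 : ℤ) ^ (J.card - k - 1)) * ((univ.filter fun m : Fin (N+1) =>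
          ∀ i : Fin (N+1), (i : ℕ) + 1 ∈ J → i ≠ (finRotate (N+1)).symm m →
            u (i - m) < u (finRotate (N+1) i - m)).card : ℤ)
        = ∑ m ∈ (univ.filter fun m : Fin (N+1) =>
          ∀ i : Fin (N+1), (i : ℕ) + 1 ∈ J → i ≠ (finRotate (N+1)).symm m →
            u (i - m) < u (finRotate (N+1) i - m)), ((-1 : ℤ) ^ (J.card - k - 1)) := by
      intro J _
      rw [Finset.sum_const, nsmul_eq_mul, mul_comm]
    rw [Finset.sum_congr rfl exch]
    rw [Finset.sum_comm' (s' := fun m : Fin (N+1) =>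
        ((Finset.Icc 1 (N+1)).powerset.filter (fun J => k < J.card)).filter
          (fun J => ∀ i : Fin (N+1), (i : ℕ) + 1 ∈ J → i ≠ (finRotate (N+1)).symm m →
            u (i - m) < u (finRotate (N+1) i - m))) (t' := univ)
      (fun J m => by
        simp only [Finset.mem_filter, Finset.mem_univ, true_and, and_true])]
    have inner : ∀ m : Fin (N+1),
        (∑ J ∈ ((Finset.Icc 1 (N+1)).powerset.filter (fun J => k < J.card)).filter
          (fun J => ∀ i : Fin (N+1), (i : ℕ) + 1 ∈ J → i ≠ (finRotate (N+1)).symm m →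
            u (i - m) < u (finRotate (N+1) i - m)), ((-1 : ℤ) ^ (J.card - k - 1)))
        = ((s-1).choose k : ℤ) := by
      intro m
      have e1 : ((Finset.Icc 1 (N+1)).powerset.filter (fun J => k < J.card)).filter
          (fun J => ∀ i : Fin (N+1), (i : ℕ) + 1 ∈ J → i ≠ (finRotate (N+1)).symm m →
            u (i - m) < u (finRotate (N+1) i - m))
          = ((univ.filter fun i : Fin (N+1) =>
            i = (finRotate (N+1)).symm m ∨ u (i - m) < u (finRotate (N+1) i - m)).image
              (fun i : Fin (N+1) => (i : ℕ) + 1)).powerset.filter (fun J => k < J.card) := by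
        rw [Finset.filter_congr (fun J hJ =>
          hcond J (Finset.mem_powerset.1 (Finset.mem_filter.1 hJ).1) m)]
        ext J
        simp only [Finset.mem_filter, Finset.mem_powerset]
        constructor
        · rintro ⟨⟨h1, h2⟩, h3⟩
          exact ⟨h3, h2⟩
        · rintro ⟨h1, h2⟩
          exact ⟨⟨h1.trans (hA1sub m), h2⟩, h1⟩
      rw [e1, powerset_alt_sum _ (hA1ne m) k, hA1card m]
    rw [Finset.sum_congr rfl fun m _ => inner m]
    rw [Finset.sum_const, Finset.card_univ, Fintype.card_fin, nsmul_eq_mul]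
    push_cast
    ring

end CQSym
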